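/- Fix integers n ≥ 1 and m ≥ 0. For each k ∈ ℕ let u_k : S³ → ℂ be the restriction to the unit sphere S³ = {(z₁, z₂) ∈ ℂ² : |z₁|² + |z₂|² = 1} of the holomorphic polynomial (z₁, z₂) ↦ z₁^{m+nk} z₂^k. Then: (1) the family {u_k : k ∈ ℕ} is linearly independent in the space of complex-valued functions on S³; (2) for every k ∈ ℕ and every θ ∈ ℝ, u_k(e^{iθ} z₁, e^{−inθ} z₂) = e^{imθ} u_k(z₁, z₂) for all (z₁, z₂) ∈ S³. Consequently, the complex vector space of restrictions to S³ of holomorphic polynomials p on ℂ² satisfying p(e^{iθ} z₁, e^{−inθ} z₂) = e^{imθ} p(z₁, z₂) for all θ is infinite-dimensional. -/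

import Mathlib

/-- Key exponential computation. -/
lemma NT_exp_helper (n m k : ℕ) (θ : ℝ) (a b : ℂ) :
    (Complex.exp ((θ : ℂ) * Complex.I) * a) ^ (m + n * k) *
      (Complex.exp (-((n : ℂ) * (θ : ℂ)) * Complex.I) * b) ^ k
    = Complex.exp ((m : ℂ) * (θ : ℂ) * Complex.I) * (a ^ (m + n * k) * b ^ k) := by
  rw [mul_pow, mul_pow, ← Complex.exp_nat_mul, ← Complex.exp_nat_mul,
    show Complex.exp (↑(m + n * k) * ((θ : ℂ) * Complex.I)) * a ^ (m + n * k) *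
        (Complex.exp (↑k * (-((n : ℂ) * (θ : ℂ)) * Complex.I)) * b ^ k)
      = Complex.exp (↑(m + n * k) * ((θ : ℂ) * Complex.I)) *
          Complex.exp (↑k * (-((n : ℂ) * (θ : ℂ)) * Complex.I)) *
          (a ^ (m + n * k) * b ^ k) by ring, ← Complex.exp_add]
  congr 2
  push_cast
  ring

/-- Linear independence of the monomial restrictions. -/
lemma NT_linearIndependent (n m : ℕ)
    (Sph : Set (ℂ × ℂ))
    (hSph : Sph = {p : ℂ × ℂ | ‖p.1‖ ^ 2 + ‖p.2‖ ^ 2 = 1})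
    (u : ℕ → (Sph → ℂ))
    (hu : ∀ (k : ℕ) (z : Sph), u k z = (z : ℂ × ℂ).1 ^ (m + n * k) * (z : ℂ × ℂ).2 ^ k) :
    LinearIndependent ℂ u := by
  rw [linearIndependent_iff]
  intro l hl
  -- the polynomial whose coefficients are the l k
  set P : Polynomial ℂ := ⟨AddMonoidAlgebra.ofCoeff l⟩ with hP
  suffices hP0 : P = 0 by
    rw [hP, Polynomial.ofFinsupp_eq_zero] at hP0
    simpa using congrArg AddMonoidAlgebra.coeff hP0
  -- points on the sphere
  have hmem : ∀ t : ℝ, ((Real.cos t : ℂ), (Real.sin t : ℂ)) ∈ Sph := by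
    intro t
    rw [hSph]
    simp only [Set.mem_setOf_eq, Complex.norm_real, Real.norm_eq_abs, sq_abs]
    rw [add_comm]
    exact Real.sin_sq_add_cos_sq t
  -- evaluation of P at the real values (cos t)^n * sin t
  have key : ∀ t ∈ Set.Icc (0:ℝ) (Real.pi / 4),
      P.IsRoot ((Real.cos t ^ n * Real.sin t : ℝ) : ℂ) := by
    intro t ht
    have hc : (0:ℝ) < Real.cos t := by
      apply Real.cos_pos_of_mem_Ioo
      constructor
      · linarith [ht.1, Real.pi_pos]
      · have := Real.pi_pos
        have h2 := ht.2
        nlinarith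
    have hz := congrFun hl ⟨_, hmem t⟩
    rw [Finsupp.linearCombination_apply] at hz
    have hz' : (l.sum fun k c => c • u k) ⟨_, hmem t⟩ = 0 := by
      rw [hz]; rfl
    rw [Finsupp.sum, Finset.sum_apply] at hz'
    set c : ℂ := (Real.cos t : ℂ)
    set s : ℂ := (Real.sin t : ℂ)
    have heval : ∀ k : ℕ, (l k • u k) ⟨_, hmem t⟩ = c ^ m * (l k * (c ^ n * s) ^ k) := by
      intro k
      simp only [Pi.smul_apply, smul_eq_mul, hu k]
      show l k * (c ^ (m + n * k) * s ^ k) = _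
      rw [pow_add, pow_mul, mul_pow]
      ring
    rw [Finset.sum_congr rfl (fun k _ => heval k), ← Finset.mul_sum] at hz'
    have hc0 : c ^ m ≠ 0 := by
      apply pow_ne_zero
      simp only [c, Ne, Complex.ofReal_eq_zero]
      exact ne_of_gt hc
    have hsum : ∑ k ∈ l.support, l k * (c ^ n * s) ^ k = 0 :=
      (mul_eq_zero.mp hz').resolve_left hc0
    -- relate to polynomial evaluation
    have hevalP : P.eval (c ^ n * s) = ∑ k ∈ l.support, l k * (c ^ n * s) ^ k := by
      rw [Polynomial.eval_eq_sum, Polynomial.sum_def]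
      rfl
    have : ((Real.cos t ^ n * Real.sin t : ℝ) : ℂ) = c ^ n * s := by
      simp [c, s, Complex.ofReal_mul, Complex.ofReal_pow]
    rw [Polynomial.IsRoot, this, hevalP]
    exact hsum
  -- infinitely many roots
  apply Polynomial.eq_zero_of_infinite_isRoot
  set g : ℝ → ℝ := fun t => Real.cos t ^ n * Real.sin t with hg
  have hpi : (0:ℝ) ≤ Real.pi / 4 := by positivity
  have hcont : ContinuousOn g (Set.Icc 0 (Real.pi / 4)) :=
    (((Real.continuous_cos.pow n).mul Real.continuous_sin)).continuousOn
  have hivt := intermediate_value_Icc hpi hcont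
  have hg0 : g 0 = 0 := by simp [hg]
  have hgq : 0 < g (Real.pi / 4) := by
    have h1 : 0 < Real.cos (Real.pi / 4) := Real.cos_pos_of_mem_Ioo
      (by constructor <;> [linarith [Real.pi_pos]; linarith [Real.pi_pos]])
    have h2 : 0 < Real.sin (Real.pi / 4) := Real.sin_pos_of_pos_of_lt_pi
      (by linarith [Real.pi_pos]) (by linarith [Real.pi_pos])
    positivity
  have hsub : (fun x : ℝ => (x : ℂ)) '' Set.Icc 0 (g (Real.pi / 4)) ⊆ {x | P.IsRoot x} := by
    rintro x ⟨y, hy, rfl⟩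
    have : y ∈ Set.Icc (g 0) (g (Real.pi / 4)) := by rwa [hg0]
    obtain ⟨t, ht, rfl⟩ := hivt this
    exact key t ht
  apply Set.Infinite.mono hsub
  exact (Set.Icc_infinite hgq).image (Complex.ofReal_injective.injOn)

theorem nontransversal_fourier_component_infinite_dimensional
    (n m : ℕ) (hn : 1 ≤ n)
    (Sph : Set (ℂ × ℂ))
    (hSph : Sph = {p : ℂ × ℂ | ‖p.1‖ ^ 2 + ‖p.2‖ ^ 2 = 1})
    (u : ℕ → (Sph → ℂ))
    (hu : ∀ (k : ℕ) (z : Sph), u k z = (z : ℂ × ℂ).1 ^ (m + n * k) * (z : ℂ × ℂ).2 ^ k) :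
    LinearIndependent ℂ u ∧
    (∀ (k : ℕ) (θ : ℝ) (z w : Sph),
      (w : ℂ × ℂ).1 = Complex.exp ((θ : ℂ) * Complex.I) * (z : ℂ × ℂ).1 →
      (w : ℂ × ℂ).2 = Complex.exp (-((n : ℂ) * (θ : ℂ)) * Complex.I) * (z : ℂ × ℂ).2 →
      u k w = Complex.exp ((m : ℂ) * (θ : ℂ) * Complex.I) * u k z) ∧
    ¬ ∃ s : Finset (Sph → ℂ),
        {f : Sph → ℂ | ∃ p : MvPolynomial (Fin 2) ℂ,
          (∀ (θ : ℝ) (v : ℂ × ℂ),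
            MvPolynomial.eval
                ![Complex.exp ((θ : ℂ) * Complex.I) * v.1,
                  Complex.exp (-((n : ℂ) * (θ : ℂ)) * Complex.I) * v.2] p
              = Complex.exp ((m : ℂ) * (θ : ℂ) * Complex.I)
                  * MvPolynomial.eval ![v.1, v.2] p) ∧
          ∀ z : Sph, f z = MvPolynomial.eval ![(z : ℂ × ℂ).1, (z : ℂ × ℂ).2] p}
        ⊆ (Submodule.span ℂ (s : Set (Sph → ℂ)) : Set (Sph → ℂ)) := by
  have hli := NT_linearIndependent n m Sph hSph u hu
  refine ⟨hli, ?_, ?_⟩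
  · intro k θ z w h1 h2
    rw [hu k w, hu k z, h1, h2, NT_exp_helper]
  · rintro ⟨s, hs⟩
    -- each u k is in the set
    have hmem : ∀ k : ℕ, u k ∈ Submodule.span ℂ (s : Set (Sph → ℂ)) := by
      intro k
      apply hs
      refine ⟨MvPolynomial.X 0 ^ (m + n * k) * MvPolynomial.X 1 ^ k, ?_, ?_⟩
      · intro θ v
        simp only [MvPolynomial.eval_mul, MvPolynomial.eval_pow, MvPolynomial.eval_X,
          Matrix.cons_val_zero, Matrix.cons_val_one, Matrix.head_cons]
        exact NT_exp_helper n m k θ v.1 v.2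
      · intro z
        rw [hu k z]
        simp only [MvPolynomial.eval_mul, MvPolynomial.eval_pow, MvPolynomial.eval_X,
          Matrix.cons_val_zero, Matrix.cons_val_one, Matrix.head_cons]
    -- derive a contradiction via dimension count
    set W := Submodule.span ℂ (s : Set (Sph → ℂ))
    let v : Fin (s.card + 1) → W := fun i => ⟨u i, hmem i⟩
    have hvli : LinearIndependent ℂ v := by
      apply LinearIndependent.of_comp W.subtype
      have : (W.subtype ∘ v) = fun i : Fin (s.card + 1) => u i := rfl
      rw [this]
      exact hli.comp (fun i : Fin (s.card + 1) => (i : ℕ)) Fin.val_injective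
    have hcard := hvli.fintype_card_le_finrank
    rw [Fintype.card_fin] at hcard
    have hle : Module.finrank ℂ W ≤ s.card := finrank_span_finset_le_card s
    omega
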